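/- (De Leeuw–Stoop bound in one dimension with equal weights.) Let n ≥ 2 and let x : Fin n → ℝ. Set d_ij := |x_i − x_j| for i < j, let N := n(n−1)/2, and let d̄ := (1/N)·Σ_{i<j} d_ij. Then (1/N)·Σ_{i<j} (d_ij − d̄)² ≥ ((n−2)/(3n)) · (1/N)·Σ_{i<j} d_ij². Consequently, for any dissimilarities δ_ij ≥ 0, with equal weights w_ij = 1/N, σ₁(x) ≥ (1/3)·((n−2)/n)·σ₂(x) whenever η₂²(x) > 0. -/

import Mathlib

open scoped BigOperators

/-- Sum of `f i j` over all pairs `i < j`. -/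
noncomputable def pairSum (n : ℕ) (f : Fin n → Fin n → ℝ) : ℝ :=
  ∑ i : Fin n, ∑ j : Fin n, if i < j then f i j else 0

/-- Distance between coordinates `i` and `j` of a one-dimensional configuration. -/
noncomputable def dist1 {n : ℕ} (x : Fin n → ℝ) (i j : Fin n) : ℝ := |x i - x j|

/-- The number of pairs `N = n(n-1)/2` (as a real number). -/
noncomputable def npairs (n : ℕ) : ℝ := (n : ℝ) * ((n : ℝ) - 1) / 2

/-- Mean distance with equal weights `1/N`. -/
noncomputable def dbar1 {n : ℕ} (x : Fin n → ℝ) : ℝ :=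
  (1 / npairs n) * pairSum n (fun i j => dist1 x i j)

/-- `η₁²` with equal weights. -/
noncomputable def eta1sq1 {n : ℕ} (x : Fin n → ℝ) : ℝ :=
  (1 / npairs n) * pairSum n (fun i j => dist1 x i j ^ 2)

/-- `η₂²` with equal weights. -/
noncomputable def eta2sq1 {n : ℕ} (x : Fin n → ℝ) : ℝ :=
  (1 / npairs n) * pairSum n (fun i j => (dist1 x i j - dbar1 x) ^ 2)

/-- Raw stress with equal weights. -/
noncomputable def sigmaR1 {n : ℕ} (δ : Fin n → Fin n → ℝ) (x : Fin n → ℝ) : ℝ :=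
  (1 / npairs n) * pairSum n (fun i j => (δ i j - dist1 x i j) ^ 2)

/-- Kruskal's stress formula one with equal weights. -/
noncomputable def sigma1' {n : ℕ} (δ : Fin n → Fin n → ℝ) (x : Fin n → ℝ) : ℝ :=
  sigmaR1 δ x / eta1sq1 x

/-- Kruskal's stress formula two with equal weights. -/
noncomputable def sigma2' {n : ℕ} (δ : Fin n → Fin n → ℝ) (x : Fin n → ℝ) : ℝ :=
  sigmaR1 δ x / eta2sq1 x

/-! ### Auxiliary lemmas -/

lemma DLS.count_lt (n : ℕ) (j : Fin n) : (∑ i : Fin n, if i < j then (1:ℝ) else 0) = j.val := by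
  rw [Finset.sum_congr rfl (fun i _ => if_congr Fin.lt_def rfl rfl)]
  rw [Fin.sum_univ_eq_sum_range (fun k => if k < j.val then (1:ℝ) else 0)]
  rw [← Finset.sum_subset (Finset.range_subset_range.2 j.2.le)
    (fun k _ hk => if_neg (by simpa using hk))]
  rw [Finset.sum_ite_of_true (fun k hk => Finset.mem_range.1 hk)]
  simp

lemma DLS.count_gt (n : ℕ) (i : Fin n) :
    (∑ j : Fin n, if i < j then (1:ℝ) else 0) = (n:ℝ) - 1 - i.val := by
  have h1 : (∑ j : Fin n, ((if i < j then (1:ℝ) else 0) + (if j < i then 1 else 0) +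
      (if j = i then 1 else 0))) = n := by
    rw [Finset.sum_congr rfl (fun j _ => show _ = (1:ℝ) from ?_)]
    · simp
    · rcases lt_trichotomy i j with h | h | h
      · rw [if_pos h, if_neg (asymm h), if_neg (fun e => absurd (e ▸ h) (lt_irrefl _))]; ring
      · subst h; simp
      · rw [if_neg (asymm h), if_pos h, if_neg h.ne]; ring
  rw [Finset.sum_add_distrib, Finset.sum_add_distrib, DLS.count_lt n i,
    Finset.sum_ite_eq' Finset.univ i (fun _ => (1:ℝ))] at h1
  simp only [Finset.mem_univ, if_true] at h1
  linarith

lemma DLS.pairSum_congr {n : ℕ} {f g : Fin n → Fin n → ℝ} (h : ∀ i j, i < j → f i j = g i j) :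
    pairSum n f = pairSum n g := by
  unfold pairSum
  refine Finset.sum_congr rfl fun i _ => Finset.sum_congr rfl fun j _ => ?_
  split
  · exact h i j ‹_›
  · rfl

lemma DLS.pairSum_add {n : ℕ} (f g : Fin n → Fin n → ℝ) :
    pairSum n (fun i j => f i j + g i j) = pairSum n f + pairSum n g := by
  unfold pairSum
  rw [← Finset.sum_add_distrib]
  refine Finset.sum_congr rfl fun i _ => ?_
  rw [← Finset.sum_add_distrib]
  refine Finset.sum_congr rfl fun j _ => ?_
  split <;> simp

lemma DLS.pairSum_smul {n : ℕ} (c : ℝ) (f : Fin n → Fin n → ℝ) :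
    pairSum n (fun i j => c * f i j) = c * pairSum n f := by
  unfold pairSum
  rw [Finset.mul_sum]
  refine Finset.sum_congr rfl fun i _ => ?_
  rw [Finset.mul_sum]
  refine Finset.sum_congr rfl fun j _ => ?_
  split <;> simp

lemma DLS.pairSum_nonneg {n : ℕ} {f : Fin n → Fin n → ℝ} (h : ∀ i j, i < j → 0 ≤ f i j) :
    0 ≤ pairSum n f := by
  refine Finset.sum_nonneg fun i _ => Finset.sum_nonneg fun j _ => ?_
  split
  · exact h i j ‹_›
  · exact le_rfl

lemma DLS.two_pairSum {n : ℕ} (F : ℝ → ℝ → ℝ) (hF : ∀ a b, F a b = F b a) (y : Fin n → ℝ) :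
    2 * pairSum n (fun i j => F (y i) (y j)) =
      (∑ i : Fin n, ∑ j : Fin n, F (y i) (y j)) - ∑ i : Fin n, F (y i) (y i) := by
  have key : ∀ i : Fin n, (∑ j : Fin n, F (y i) (y j)) =
      (∑ j : Fin n, if i < j then F (y i) (y j) else 0) +
      (∑ j : Fin n, if j < i then F (y i) (y j) else 0) + F (y i) (y i) := by
    intro i
    have split : ∀ j : Fin n, F (y i) (y j) =
        (if i < j then F (y i) (y j) else 0) + (if j < i then F (y i) (y j) else 0) +
        (if j = i then F (y i) (y j) else 0) := by
      intro j
      rcases lt_trichotomy i j with h | h | h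
      · rw [if_pos h, if_neg (asymm h), if_neg (fun e => absurd (e ▸ h) (lt_irrefl _))]; ring
      · subst h; simp
      · rw [if_neg (asymm h), if_pos h, if_neg h.ne]; ring
    rw [Finset.sum_congr rfl (fun j _ => split j), Finset.sum_add_distrib,
      Finset.sum_add_distrib, Finset.sum_ite_eq' Finset.univ i (fun j => F (y i) (y j))]
    simp
  have hsplit : (∑ i : Fin n, ∑ j : Fin n, F (y i) (y j)) =
      pairSum n (fun i j => F (y i) (y j)) +
      (∑ i : Fin n, ∑ j : Fin n, if j < i then F (y i) (y j) else 0) +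
      ∑ i : Fin n, F (y i) (y i) := by
    unfold pairSum
    rw [Finset.sum_congr rfl (fun i _ => key i), Finset.sum_add_distrib, Finset.sum_add_distrib]
  have hswap : (∑ i : Fin n, ∑ j : Fin n, if j < i then F (y i) (y j) else 0) =
      pairSum n (fun i j => F (y i) (y j)) := by
    rw [Finset.sum_comm]
    unfold pairSum
    refine Finset.sum_congr rfl fun j _ => Finset.sum_congr rfl fun i _ => ?_
    split <;> simp [hF]
  rw [hswap] at hsplit
  linarith

lemma DLS.pairSum_perm {n : ℕ} (F : ℝ → ℝ → ℝ) (hF : ∀ a b, F a b = F b a)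
    (x : Fin n → ℝ) (σ : Equiv.Perm (Fin n)) :
    pairSum n (fun i j => F (x (σ i)) (x (σ j))) = pairSum n (fun i j => F (x i) (x j)) := by
  have h1 := DLS.two_pairSum F hF (x ∘ σ)
  have h2 := DLS.two_pairSum F hF x
  simp only [Function.comp] at h1
  have e1 : (∑ i : Fin n, ∑ j : Fin n, F (x (σ i)) (x (σ j))) =
      ∑ i : Fin n, ∑ j : Fin n, F (x i) (x j) := by
    rw [← Equiv.sum_comp σ (fun i => ∑ j : Fin n, F (x i) (x j))]
    exact Finset.sum_congr rfl fun i _ =>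
      (Equiv.sum_comp σ (fun j => F (x (σ i)) (x j))).symm ▸ rfl
  have e2 : (∑ i : Fin n, F (x (σ i)) (x (σ i))) = ∑ i : Fin n, F (x i) (x i) :=
    Equiv.sum_comp σ (fun i => F (x i) (x i))
  rw [e1, e2] at h1
  linarith

lemma DLS.sum_range_real (n : ℕ) : (∑ k ∈ Finset.range n, (k:ℝ)) = n * (n - 1) / 2 := by
  induction n with
  | zero => simp
  | succ m ih => rw [Finset.sum_range_succ, ih]; push_cast; ring

lemma DLS.sum_range_sq_real (n : ℕ) :
    (∑ k ∈ Finset.range n, (k:ℝ)^2) = n * (n-1) * (2*n-1) / 6 := by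
  induction n with
  | zero => simp
  | succ m ih => rw [Finset.sum_range_succ, ih]; push_cast; ring

lemma DLS.sum_a_zero (n : ℕ) : (∑ i : Fin n, (2*(i.val:ℝ) - ((n:ℝ)-1))) = 0 := by
  rw [Fin.sum_univ_eq_sum_range (fun k => 2*(k:ℝ) - ((n:ℝ)-1))]
  rw [Finset.sum_sub_distrib, ← Finset.mul_sum, DLS.sum_range_real]
  simp
  ring

lemma DLS.sum_a_sq (n : ℕ) :
    (∑ i : Fin n, (2*(i.val:ℝ) - ((n:ℝ)-1))^2) = n * ((n:ℝ)^2 - 1) / 3 := by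
  rw [Fin.sum_univ_eq_sum_range (fun k => (2*(k:ℝ) - ((n:ℝ)-1))^2)]
  have h : ∀ k : ℕ, (2*(k:ℝ) - ((n:ℝ)-1))^2 = 4*(k:ℝ)^2 - (4*((n:ℝ)-1))*(k:ℝ) + ((n:ℝ)-1)^2 := by
    intro k; ring
  rw [Finset.sum_congr rfl (fun k _ => h k), Finset.sum_add_distrib, Finset.sum_sub_distrib,
    ← Finset.mul_sum, ← Finset.mul_sum, DLS.sum_range_real, DLS.sum_range_sq_real]
  simp
  ring

lemma DLS.pairSum_telescope {n : ℕ} (y : Fin n → ℝ) :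
    pairSum n (fun i j => y j - y i) = ∑ i : Fin n, (2*(i.val:ℝ) - ((n:ℝ)-1)) * y i := by
  unfold pairSum
  have split : ∀ i j : Fin n, (if i < j then y j - y i else 0) =
      (if i < j then (1:ℝ) else 0) * y j - (if i < j then (1:ℝ) else 0) * y i := by
    intro i j; split <;> simp
  simp_rw [Finset.sum_congr rfl (fun i _ => Finset.sum_congr rfl (fun j _ => split i j))]
  rw [Finset.sum_congr rfl (fun i (_ : i ∈ Finset.univ) => Finset.sum_sub_distrib _ _),
    Finset.sum_sub_distrib]
  have h1 : (∑ i : Fin n, ∑ j : Fin n, (if i < j then (1:ℝ) else 0) * y j) =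
      ∑ j : Fin n, (j.val:ℝ) * y j := by
    rw [Finset.sum_comm]
    refine Finset.sum_congr rfl fun j _ => ?_
    rw [← Finset.sum_mul, DLS.count_lt n j]
  have h2 : (∑ i : Fin n, ∑ j : Fin n, (if i < j then (1:ℝ) else 0) * y i) =
      ∑ i : Fin n, ((n:ℝ) - 1 - i.val) * y i := by
    refine Finset.sum_congr rfl fun i _ => ?_
    rw [← Finset.sum_mul, DLS.count_gt n i]
  rw [h1, h2, ← Finset.sum_sub_distrib]
  refine Finset.sum_congr rfl fun i _ => ?_
  ring

lemma DLS.pairSum_one (n : ℕ) : pairSum n (fun _ _ => (1:ℝ)) = (n:ℝ) * ((n:ℝ)-1) / 2 := by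
  unfold pairSum
  rw [Finset.sum_congr rfl (fun i (_ : i ∈ Finset.univ) => DLS.count_gt n i)]
  rw [Finset.sum_sub_distrib, Finset.sum_sub_distrib]
  rw [Fin.sum_univ_eq_sum_range (fun k => (k:ℝ)), DLS.sum_range_real]
  simp
  ring

lemma DLS.pairSum_sq_eq {n : ℕ} (y : Fin n → ℝ) :
    pairSum n (fun i j => (y j - y i)^2) =
      (n:ℝ) * (∑ i : Fin n, (y i)^2) - (∑ i : Fin n, y i)^2 := by
  have h := DLS.two_pairSum (fun a b => (b - a)^2) (fun a b => by ring) y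
  simp only [sub_self] at h
  have hz : (∑ i : Fin n, ((0:ℝ))^2) = 0 := by simp
  rw [hz, sub_zero] at h
  have hrow : ∀ i : Fin n, (∑ j : Fin n, (y j - y i)^2) =
      (∑ j : Fin n, (y j)^2) - (2*(∑ j : Fin n, y j))*(y i) + (n:ℝ)*(y i)^2 := by
    intro i
    rw [Finset.sum_congr rfl (fun j (_ : j ∈ Finset.univ) =>
      show (y j - y i)^2 = ((y j)^2 - (y i*2)*(y j)) + (y i)^2 by ring)]
    rw [Finset.sum_add_distrib, Finset.sum_sub_distrib, ← Finset.mul_sum, Finset.sum_const,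
      Finset.card_univ, Fintype.card_fin, nsmul_eq_mul]
    ring
  rw [Finset.sum_congr rfl (fun i (_ : i ∈ Finset.univ) => hrow i), Finset.sum_add_distrib,
    Finset.sum_sub_distrib, ← Finset.mul_sum, ← Finset.mul_sum, Finset.sum_const,
    Finset.card_univ, Fintype.card_fin, nsmul_eq_mul] at h
  linarith

lemma DLS.key_mono {n : ℕ} (hn : 2 ≤ n) (y : Fin n → ℝ) (hy : Monotone y) :
    (pairSum n (fun i j => |y i - y j|))^2 ≤
      (((n:ℝ)^2 - 1)/3) * pairSum n (fun i j => |y i - y j|^2) := by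
  have hnR : (2:ℝ) ≤ (n:ℝ) := by exact_mod_cast hn
  set m : ℝ := (n:ℝ) with hm
  set a : Fin n → ℝ := fun i => 2*(i.val:ℝ) - (m-1) with ha
  set Sy := ∑ i : Fin n, y i with hSy
  set Qy := ∑ i : Fin n, (y i)^2 with hQy
  set z : Fin n → ℝ := fun i => y i - Sy/m with hz
  have h1 : pairSum n (fun i j => |y i - y j|) = pairSum n (fun i j => y j - y i) := by
    refine DLS.pairSum_congr fun i j hij => ?_
    rw [abs_sub_comm, abs_of_nonneg (sub_nonneg.2 (hy hij.le))]
  have h2 : pairSum n (fun i j => |y i - y j|^2) = pairSum n (fun i j => (y j - y i)^2) := by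
    refine DLS.pairSum_congr fun i j _ => ?_
    rw [sq_abs]; ring
  have hmne : m ≠ 0 := by positivity
  have hS1 : pairSum n (fun i j => y j - y i) = ∑ i : Fin n, a i * z i := by
    rw [DLS.pairSum_telescope]
    rw [Finset.sum_congr rfl (fun i (_ : i ∈ Finset.univ) =>
      show a i * z i = a i * y i - (Sy/m) * a i by rw [hz]; ring), Finset.sum_sub_distrib,
      ← Finset.mul_sum, DLS.sum_a_zero]
    simp [ha]
    rfl
  have hcs := Finset.sum_mul_sq_le_sq_mul_sq Finset.univ a z
  have hasq : (∑ i : Fin n, (a i)^2) = m * (m^2 - 1)/3 := DLS.sum_a_sq n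
  have hzsq : (∑ i : Fin n, (z i)^2) = Qy - Sy^2/m := by
    rw [Finset.sum_congr rfl (fun i (_ : i ∈ Finset.univ) =>
      show (z i)^2 = (y i)^2 - (2*(Sy/m))*(y i) + (Sy/m)^2 by rw [hz]; ring)]
    rw [Finset.sum_add_distrib, Finset.sum_sub_distrib, ← Finset.mul_sum]
    simp [Finset.card_univ, ← hSy, ← hQy]
    field_simp
    ring
  rw [h1, h2, hS1, DLS.pairSum_sq_eq]
  calc (∑ i : Fin n, a i * z i)^2 ≤ (∑ i : Fin n, (a i)^2) * (∑ i : Fin n, (z i)^2) := hcs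
    _ = (m*(m^2-1)/3) * (Qy - Sy^2/m) := by rw [hasq, hzsq]
    _ = ((m^2-1)/3) * (m * Qy - Sy^2) := by field_simp

lemma DLS.key_ineq {n : ℕ} (hn : 2 ≤ n) (x : Fin n → ℝ) :
    (pairSum n (fun i j => |x i - x j|))^2 ≤
      (((n:ℝ)^2 - 1)/3) * pairSum n (fun i j => |x i - x j|^2) := by
  set σ := Tuple.sort x with hσ
  have hmono : Monotone (x ∘ σ) := Tuple.monotone_sort x
  have e1 : pairSum n (fun i j => |(x ∘ σ) i - (x ∘ σ) j|) =
      pairSum n (fun i j => |x i - x j|) :=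
    DLS.pairSum_perm (fun a b => |a - b|) (fun a b => abs_sub_comm a b) x σ
  have e2 : pairSum n (fun i j => |(x ∘ σ) i - (x ∘ σ) j|^2) =
      pairSum n (fun i j => |x i - x j|^2) :=
    DLS.pairSum_perm (fun a b => |a - b|^2) (fun a b => show |a-b|^2 = |b-a|^2 by rw [abs_sub_comm]) x σ
  rw [← e1, ← e2]
  exact DLS.key_mono hn (x ∘ σ) hmono

lemma DLS.expand {n : ℕ} (x : Fin n → ℝ) :
    pairSum n (fun i j => (dist1 x i j - dbar1 x) ^ 2) =
      pairSum n (fun i j => dist1 x i j ^ 2) +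
        ((-(2 * dbar1 x)) * pairSum n (fun i j => dist1 x i j) +
          (dbar1 x)^2 * ((n:ℝ) * ((n:ℝ)-1) / 2)) := by
  rw [DLS.pairSum_congr (fun i j _ =>
    show (dist1 x i j - dbar1 x)^2 =
      dist1 x i j ^ 2 + ((-(2 * dbar1 x)) * dist1 x i j + (dbar1 x)^2 * 1) by ring)]
  rw [DLS.pairSum_add, DLS.pairSum_add, DLS.pairSum_smul, DLS.pairSum_smul, DLS.pairSum_one]

lemma DLS.main1 {n : ℕ} (hn : 2 ≤ n) (x : Fin n → ℝ) :
    (1 / npairs n) * pairSum n (fun i j => (dist1 x i j - dbar1 x) ^ 2) ≥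
      (((n : ℝ) - 2) / (3 * (n : ℝ))) *
        ((1 / npairs n) * pairSum n (fun i j => dist1 x i j ^ 2)) := by
  have hm2 : (2:ℝ) ≤ (n:ℝ) := by exact_mod_cast hn
  set m : ℝ := (n:ℝ) with hmdef
  have hN : npairs n = m * (m - 1) / 2 := rfl
  have hNpos : 0 < npairs n := by rw [hN]; nlinarith
  set S1 := pairSum n (fun i j => dist1 x i j) with hS1def
  set S2 := pairSum n (fun i j => dist1 x i j ^ 2) with hS2def
  have hdbar : dbar1 x = (1 / npairs n) * S1 := rfl
  have hkey : S1^2 ≤ ((m^2 - 1)/3) * S2 := by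
    have := DLS.key_ineq hn x
    simpa [dist1, hS1def, hS2def] using this
  rw [DLS.expand, hdbar, ge_iff_le, hN]
  have hmpos : (0:ℝ) < m := by linarith
  have hm1pos : (0:ℝ) < m - 1 := by linarith
  rw [div_mul_eq_mul_div, div_le_iff₀ (by positivity)]
  have expand : 1 / (m * (m - 1) / 2) *
      (S2 + (-(2 * (1 / (m * (m - 1) / 2) * S1)) * S1 +
        (1 / (m * (m - 1) / 2) * S1) ^ 2 * (m * (m - 1) / 2))) * (3 * m) =
      (3 * m / (m * (m-1)/2)) * S2 - (3 * m / (m * (m-1)/2)^2) * S1^2 := by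
    field_simp
    ring
  rw [expand]
  have hfrac : ((m - 2) * (1 / (m * (m - 1) / 2) * S2)) =
      (3 * m / (m * (m-1)/2)) * S2 - ((2*m+2)/(m*(m-1)/2)) * S2 := by
    field_simp
    ring
  rw [hfrac]
  have hlast : (3 * m / (m * (m-1)/2)^2) * S1^2 ≤ ((2*m+2)/(m*(m-1)/2)) * S2 := by
    calc (3 * m / (m * (m-1)/2)^2) * S1^2
        ≤ (3 * m / (m * (m-1)/2)^2) * (((m^2 - 1)/3) * S2) := by
          apply mul_le_mul_of_nonneg_left hkey (by positivity)
      _ = ((2*m+2)/(m*(m-1)/2)) * S2 := by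
          field_simp
          ring
  linarith

lemma DLS.eta_split {n : ℕ} (hn : 2 ≤ n) (x : Fin n → ℝ) :
    eta1sq1 x = eta2sq1 x + (dbar1 x)^2 := by
  have hm2 : (2:ℝ) ≤ (n:ℝ) := by exact_mod_cast hn
  have hN : npairs n = (n:ℝ) * ((n:ℝ) - 1) / 2 := rfl
  have hNpos : 0 < npairs n := by rw [hN]; nlinarith
  have hNne : npairs n ≠ 0 := ne_of_gt hNpos
  show (1 / npairs n) * pairSum n (fun i j => dist1 x i j ^ 2) =
    (1 / npairs n) * pairSum n (fun i j => (dist1 x i j - dbar1 x) ^ 2) + (dbar1 x)^2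
  rw [DLS.expand]
  have hd : (1 / npairs n) * pairSum n (fun i j => dist1 x i j) = dbar1 x := rfl
  have hNN : (1 / npairs n) * ((n:ℝ) * ((n:ℝ)-1) / 2) = 1 := by
    rw [← hN, one_div, inv_mul_cancel₀ hNne]
  have hdist : (1 / npairs n) * (pairSum n (fun i j => dist1 x i j ^ 2) +
      ((-(2 * dbar1 x)) * pairSum n (fun i j => dist1 x i j) +
        (dbar1 x)^2 * ((n:ℝ) * ((n:ℝ)-1) / 2))) + (dbar1 x)^2 =
      (1 / npairs n) * pairSum n (fun i j => dist1 x i j ^ 2) +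
        ((-(2 * dbar1 x)) * ((1 / npairs n) * pairSum n (fun i j => dist1 x i j)) +
          (dbar1 x)^2 * ((1 / npairs n) * ((n:ℝ) * ((n:ℝ)-1) / 2)) + (dbar1 x)^2) := by
    ring
  rw [hdist, hd, hNN]
  ring

/-- De Leeuw–Stoop bound in one dimension with equal weights:
`η₂²(x) ≥ ((n-2)/(3n))·η₁²(x)`, and consequently
`σ₁(x) ≥ (1/3)·((n-2)/n)·σ₂(x)` whenever `η₂²(x) > 0`. -/
theorem deleeuw_stoop_bound
    {n : ℕ} (hn : 2 ≤ n) (x : Fin n → ℝ) :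
    (1 / npairs n) * pairSum n (fun i j => (dist1 x i j - dbar1 x) ^ 2) ≥
      (((n : ℝ) - 2) / (3 * (n : ℝ))) *
        ((1 / npairs n) * pairSum n (fun i j => dist1 x i j ^ 2)) ∧
    ∀ δ : Fin n → Fin n → ℝ, (∀ i j : Fin n, i < j → 0 ≤ δ i j) →
      0 < eta2sq1 x →
      sigma1' δ x ≥ (1 / 3) * (((n : ℝ) - 2) / (n : ℝ)) * sigma2' δ x := by
  have hm2 : (2:ℝ) ≤ (n:ℝ) := by exact_mod_cast hn
  refine ⟨DLS.main1 hn x, fun δ hδ h2 => ?_⟩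
  have hNpos : 0 < npairs n := by
    have : npairs n = (n:ℝ) * ((n:ℝ) - 1) / 2 := rfl
    rw [this]; nlinarith
  have heta2 : eta2sq1 x ≥ (((n:ℝ) - 2) / (3 * (n:ℝ))) * eta1sq1 x := DLS.main1 hn x
  have heta12 : eta1sq1 x = eta2sq1 x + (dbar1 x)^2 := DLS.eta_split hn x
  have h1pos : 0 < eta1sq1 x := by nlinarith [sq_nonneg (dbar1 x)]
  have hA : 0 ≤ sigmaR1 δ x :=
    mul_nonneg (by positivity) (DLS.pairSum_nonneg (fun i j _ => sq_nonneg _))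
  show sigmaR1 δ x / eta1sq1 x ≥ (1 / 3) * (((n:ℝ) - 2) / (n:ℝ)) * (sigmaR1 δ x / eta2sq1 x)
  rw [ge_iff_le]
  have hcm : (0:ℝ) < (n:ℝ) := by linarith
  have hre : (1 / 3) * (((n:ℝ) - 2) / (n:ℝ)) * (sigmaR1 δ x / eta2sq1 x) =
      ((((n:ℝ) - 2) / (3 * (n:ℝ))) * sigmaR1 δ x) / eta2sq1 x := by
    simp only [div_eq_mul_inv, mul_inv]
    ring
  rw [hre, div_le_div_iff₀ h2 h1pos]
  nlinarith [mul_nonneg hA (sub_nonneg.2 heta2)]
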